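/- In the linear assembly language with program-counter semantics, concatenation of two jump-free programs P1 and P2 is semantically the composition of their effects: running P1 ++ P2 from state σ terminates in state ⟦P2⟧(⟦P1⟧(σ)), where ⟦P⟧ denotes the straight-line effect of the jump-free program P. (Part rebuild for basic blocks: assembling two adjacent translated blocks is just concatenation.) -/

import Mathlib

/-- Instructions of a linear (labeled) assembly language. -/
inductive Instr (State Label : Type*) where
  | exec (f : State → State) : Instr State Label
  | jmp (l : Label) : Instr State Label
  | cjmp (c : State → Bool) (l : Label) : Instr State Label
  | label (l : Label) : Instr State Label

/-- Small-step semantics with a program counter on configurations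
`(pc, σ)`: `exec` applies its function and increments the counter, `label`
is a no-op, jumps move the counter to a position holding `label l`. -/
inductive Step {State Label : Type*} (P : List (Instr State Label)) :
    ℕ × State → ℕ × State → Prop where
  | exec {pc σ f} : P[pc]? = some (.exec f) → Step P (pc, σ) (pc + 1, f σ)
  | label {pc σ l} : P[pc]? = some (.label l) → Step P (pc, σ) (pc + 1, σ)
  | jmp {pc pc' σ l} : P[pc]? = some (.jmp l) →
      P[pc']? = some (.label l) → Step P (pc, σ) (pc', σ)
  | cjmpTrue {pc pc' σ c l} : P[pc]? = some (.cjmp c l) → c σ = true →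
      P[pc']? = some (.label l) → Step P (pc, σ) (pc', σ)
  | cjmpFalse {pc σ c l} : P[pc]? = some (.cjmp c l) → c σ = false →
      Step P (pc, σ) (pc + 1, σ)

/-- Execution of a whole program: start at counter `0`, terminate when the
counter reaches the program length. -/
def Runs {State Label : Type*} (P : List (Instr State Label))
    (σ σ' : State) : Prop :=
  Relation.ReflTransGen (Step P) (0, σ) (P.length, σ')

/-- A program is jump-free if it contains no `jmp` or `cjmp` instruction. -/
def JumpFree {State Label : Type*} (P : List (Instr State Label)) : Prop :=
  ∀ i ∈ P, match i with
    | .jmp _ => False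
    | .cjmp _ _ => False
    | _ => True

/-- Straight-line effect of a program: the composition, in order, of all its
`exec` functions. -/
def effect {State Label : Type*} (P : List (Instr State Label)) :
    State → State :=
  P.foldl (fun g i => match i with | .exec f => f ∘ g | _ => g) id




private lemma effect_foldl {State Label : Type*} (P : List (Instr State Label))
    (g : State → State) :
    P.foldl (fun g i => match i with | .exec f => f ∘ g | _ => g) g
      = effect P ∘ g := by
  induction P generalizing g with
  | nil => rfl
  | cons i T ih =>
    rw [List.foldl_cons, ih]
    cases i with
    | exec f =>
      have h : effect (Instr.exec f :: T) = effect T ∘ (f ∘ id) := ih (f ∘ id)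
      rw [h]; rfl
    | jmp l =>
      have h : effect (Instr.jmp l :: T) = effect T ∘ id := ih id
      rw [h]; rfl
    | cjmp c l =>
      have h : effect (Instr.cjmp c l :: T) = effect T ∘ id := ih id
      rw [h]; rfl
    | label l =>
      have h : effect (Instr.label l :: T) = effect T ∘ id := ih id
      rw [h]; rfl

private lemma effect_cons_exec {State Label : Type*} (f : State → State)
    (P : List (Instr State Label)) (σ : State) :
    effect (.exec f :: P) σ = effect P (f σ) := by
  have h : effect (Instr.exec f :: P) = effect P ∘ (f ∘ id) := effect_foldl P (f ∘ id)
  rw [h]; rfl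

private lemma effect_cons_label {State Label : Type*} (l : Label)
    (P : List (Instr State Label)) (σ : State) :
    effect (Instr.label l :: P) σ = effect P σ := by
  have h : effect (Instr.label l :: P) = effect P ∘ id := effect_foldl P id
  rw [h]; rfl

private lemma aux_runs {State Label : Type*} :
    ∀ (P L R : List (Instr State Label)), JumpFree P → ∀ σ : State,
      Relation.ReflTransGen (Step (L ++ (P ++ R))) (L.length, σ)
        (L.length + P.length, effect P σ) := by
  intro P
  induction P with
  | nil =>
    intro L R _ σ
    show Relation.ReflTransGen _ _ (L.length + 0, effect [] σ)
    exact Relation.ReflTransGen.refl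
  | cons i T ih =>
    intro L R hJF σ
    have hget : (L ++ (i :: T ++ R))[L.length]? = some i := by
      rw [List.getElem?_append_right le_rfl]
      simp
    have hassoc : L ++ (i :: T ++ R) = (L ++ [i]) ++ (T ++ R) := by simp
    have hJF' : JumpFree T := fun j hj => hJF j (List.mem_cons_of_mem _ hj)
    have hi := hJF i (List.mem_cons_self)
    cases i with
    | exec f =>
      refine Relation.ReflTransGen.head (Step.exec hget) ?_
      rw [hassoc]
      have h2 := ih (L ++ [Instr.exec f]) R hJF' (f σ)
      simp only [List.length_append, List.length_cons, List.length_nil,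
        Nat.zero_add] at h2
      rw [effect_cons_exec]
      show Relation.ReflTransGen _ (L.length + 1, f σ)
        (L.length + (T.length + 1), effect T (f σ))
      rw [show L.length + (T.length + 1) = L.length + 1 + T.length from by omega]
      exact h2
    | label l =>
      refine Relation.ReflTransGen.head (Step.label hget) ?_
      rw [hassoc]
      have h2 := ih (L ++ [Instr.label l]) R hJF' σ
      simp only [List.length_append, List.length_cons, List.length_nil,
        Nat.zero_add] at h2
      rw [effect_cons_label]
      show Relation.ReflTransGen _ (L.length + 1, σ)
        (L.length + (T.length + 1), effect T σ)
      rw [show L.length + (T.length + 1) = L.length + 1 + T.length from by omega]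
      exact h2
    | jmp l => exact absurd hi (by simp)
    | cjmp c l => exact absurd hi (by simp)

/-- concatenation of two jump-free programs is semantically the
composition of their effects: running `P₁ ++ P₂` from `σ` terminates in
`⟦P₂⟧ (⟦P₁⟧ σ)`.  (Part rebuild for basic blocks is just concatenation.) -/
theorem jumpFree_append_runs {State Label : Type*}
    (P₁ P₂ : List (Instr State Label))
    (h₁ : JumpFree P₁) (h₂ : JumpFree P₂) (σ : State) :
    Runs (P₁ ++ P₂) σ (effect P₂ (effect P₁ σ)) := by
  have h1 := aux_runs P₁ [] P₂ h₁ σ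
  have h2 := aux_runs P₂ P₁ [] h₂ (effect P₁ σ)
  simp at h1 h2
  exact Relation.ReflTransGen.trans h1 (by simpa [Runs, List.length_append] using h2)
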